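/- Let a₁,a₂,a₃ and φ₁,φ₂,φ₃ be indeterminates (indices mod 3) and define the automorphism s₁ by s₁(a₁)=1/a₁, s₁(a₂)=a₂a₁, s₁(a₃)=a₃a₁, s₁(φ₁)=φ₁/a₁, s₁(φ₂)=φ₂(a₁+φ₁)/(1+φ₁), s₁(φ₃)=φ₃(1+φ₁)/(1+φ₁/a₁). Then s₁ is an involution of ℂ(a₁,a₂,a₃,φ₁,φ₂,φ₃). -/
import Mathlib
set_option maxHeartbeats 1000000
set_option synthInstance.maxHeartbeats 400000


noncomputable section

/-- The rational function field `ℂ(a₁,a₂,a₃,φ₁,φ₂,φ₃)`. -/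
abbrev K : Type := FractionRing (MvPolynomial (Fin 6) ℂ)

def X (i : Fin 6) : K := algebraMap (MvPolynomial (Fin 6) ℂ) K (MvPolynomial.X i)

def a1 : K := X 0
def a2 : K := X 1
def a3 : K := X 2
def φ1 : K := X 3
def φ2 : K := X 4
def φ3 : K := X 5

/-- the Bäcklund transformation `s₁` of the q-Painlevé system
is an involution of `ℂ(a₁,a₂,a₃,φ₁,φ₂,φ₃)`. -/
theorem stmt16 (s : K ≃ₐ[ℂ] K)
    (h1 : s a1 = 1 / a1)
    (h2 : s a2 = a2 * a1)
    (h3 : s a3 = a3 * a1)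
    (h4 : s φ1 = φ1 / a1)
    (h5 : s φ2 = φ2 * (a1 + φ1) / (1 + φ1))
    (h6 : s φ3 = φ3 * (1 + φ1) / (1 + φ1 / a1)) :
    ∀ k : K, s (s k) = k := by
  have inj := IsFractionRing.injective (MvPolynomial (Fin 6) ℂ) K
  have ha1 : a1 ≠ 0 :=
    (map_ne_zero_iff _ inj).mpr (MvPolynomial.X_ne_zero 0)
  have h1φ : (1 : K) + φ1 ≠ 0 := by
    have e : (1 : K) + φ1 = algebraMap (MvPolynomial (Fin 6) ℂ) K (1 + MvPolynomial.X 3) := by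
      simp [φ1, X, map_add, map_one]
    rw [e, map_ne_zero_iff _ inj]
    intro h
    have := congrArg (MvPolynomial.eval (fun _ => (0:ℂ))) h
    simp at this
  have haφ : a1 + φ1 ≠ 0 := by
    have e : a1 + φ1 = algebraMap (MvPolynomial (Fin 6) ℂ) K (MvPolynomial.X 0 + MvPolynomial.X 3) := by
      simp [a1, φ1, X, map_add]
    rw [e, map_ne_zero_iff _ inj]
    intro h
    have := congrArg (MvPolynomial.eval (fun _ => (1:ℂ))) h
    norm_num at this
  have hd : (1 : K) + φ1 / a1 ≠ 0 := by
    rw [show (1 : K) + φ1 / a1 = (a1 + φ1) / a1 by rw [add_div, div_self ha1]]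
    exact div_ne_zero haφ ha1
  -- action on the six generators
  have g0 : s (s a1) = a1 := by
    rw [h1, map_div₀, map_one, h1, one_div_one_div]
  have g3 : s (s φ1) = φ1 := by
    rw [h4, map_div₀, h4, h1]
    field_simp
  have g1 : s (s a2) = a2 := by
    rw [h2, map_mul, h2, h1]
    field_simp
  have g2 : s (s a3) = a3 := by
    rw [h3, map_mul, h3, h1]
    field_simp
  have g4 : s (s φ2) = φ2 := by
    rw [h5, map_div₀, map_mul, map_add, map_add, map_one, h5, h1, h4]
    field_simp
  have g5 : s (s φ3) = φ3 := by
    rw [h6, map_div₀, map_mul, map_add, map_add, map_one, map_div₀, h6, h4, h1]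
    field_simp
  have gen : ∀ i : Fin 6, s (s (X i)) = X i := by
    intro i
    fin_cases i
    · exact g0
    · exact g1
    · exact g2
    · exact g3
    · exact g4
    · exact g5
  have key : ∀ p : MvPolynomial (Fin 6) ℂ,
      s (s (algebraMap (MvPolynomial (Fin 6) ℂ) K p)) = algebraMap (MvPolynomial (Fin 6) ℂ) K p := by
    intro p
    induction p using MvPolynomial.induction_on with
    | C c =>
        rw [show (algebraMap (MvPolynomial (Fin 6) ℂ) K) (MvPolynomial.C c)
            = algebraMap ℂ K c from
          (IsScalarTower.algebraMap_apply ℂ (MvPolynomial (Fin 6) ℂ) K c).symm]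
        simp
    | add p q hp hq => simp [map_add, hp, hq]
    | mul_X p i hp =>
        rw [map_mul, map_mul, map_mul, hp]
        have := gen i
        simp only [X] at this
        rw [this]
  intro k
  obtain ⟨p, q, -, rfl⟩ := IsFractionRing.div_surjective (A := MvPolynomial (Fin 6) ℂ) k
  rw [map_div₀, map_div₀, key, key]
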